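/- The function φ solves the Ornstein–Uhlenbeck characteristic equation: for every x ∈ ℝ, (1/2)σ² φ″(x) + θ(μ − x) φ′(x) = λ φ(x). -/

import Mathlib

open MeasureTheory Real Set Filter Topology

/-- The (positive multiple of the) strictly decreasing fundamental solution `φ_λ` of the
Ornstein–Uhlenbeck equation `(1/2)σ² f'' + θ(μ - x) f' = λ f`, written as the integral
`φ(x) = ∫₀^∞ t^(λ/θ - 1) exp(-t²/2 - a t (x - μ)) dt` with `a = √(2θ)/σ`. -/
noncomputable def OUphi (lam th mu sig : ℝ) (x : ℝ) : ℝ :=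
  ∫ t in Set.Ioi (0:ℝ),
    t ^ (lam / th - 1) * Real.exp (-t ^ 2 / 2 - Real.sqrt (2 * th) / sig * t * (x - mu))

noncomputable def Jint (p c : ℝ) : ℝ :=
  ∫ t in Set.Ioi (0:ℝ), t ^ p * Real.exp (-t ^ 2 / 2 - c * t)

lemma OU_cont (p c : ℝ) : ContinuousOn
    (fun t : ℝ => t ^ p * Real.exp (-t ^ 2 / 2 - c * t)) (Ioi 0) := by
  apply ContinuousOn.mul
  · intro t ht
    exact (Real.continuousAt_rpow_const t p (Or.inl (ne_of_gt ht))).continuousWithinAt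
  · exact (Real.continuous_exp.comp (by continuity)).continuousOn

lemma OU_bound (p c : ℝ) {t : ℝ} (ht : 0 < t) :
    t ^ p * Real.exp (-t ^ 2 / 2 - c * t)
      ≤ Real.exp (c ^ 2) * (t ^ p * Real.exp (-(1/4) * t ^ 2)) := by
  rw [show Real.exp (c^2) * (t ^ p * Real.exp (-(1/4)*t^2))
      = t ^ p * (Real.exp (c^2) * Real.exp (-(1/4)*t^2)) by ring, ← Real.exp_add]
  apply mul_le_mul_of_nonneg_left _ (Real.rpow_nonneg ht.le p)
  apply Real.exp_le_exp.mpr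
  nlinarith [sq_nonneg (t/2 + c)]

lemma OU_integrable (p c : ℝ) (hp : -1 < p) :
    IntegrableOn (fun t : ℝ => t ^ p * Real.exp (-t ^ 2 / 2 - c * t)) (Ioi 0) := by
  apply Integrable.mono'
    (((integrableOn_rpow_mul_exp_neg_mul_sq (by norm_num : (0:ℝ) < 1/4) hp)).const_mul
      (Real.exp (c ^ 2)))
  · exact (OU_cont p c).aestronglyMeasurable measurableSet_Ioi
  · filter_upwards [ae_restrict_mem measurableSet_Ioi] with t ht
    rw [Real.norm_eq_abs,
      abs_of_nonneg (mul_nonneg (Real.rpow_nonneg (le_of_lt ht) p) (Real.exp_pos _).le)]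
    exact OU_bound p c ht

lemma hasDerivAt_Jint (p a mu : ℝ) (hp : -1 < p) (ha : 0 < a) (x : ℝ) :
    HasDerivAt (fun y => Jint p (a * (y - mu))) (-a * Jint (p+1) (a * (x - mu))) x := by
  set F : ℝ → ℝ → ℝ := fun y t => t ^ p * Real.exp (-t ^ 2 / 2 - (a * (y - mu)) * t) with hF
  set F' : ℝ → ℝ → ℝ := fun y t =>
    (-(a * t)) * (t ^ p * Real.exp (-t ^ 2 / 2 - (a * (y - mu)) * t)) with hF'
  set C : ℝ := a * (|x - mu| + 1) with hC
  have key := hasDerivAt_integral_of_dominated_loc_of_deriv_le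
    (μ := volume.restrict (Ioi (0:ℝ))) (F := F) (F' := F') (x₀ := x)
    (bound := fun t => a * (t ^ (p+1) * Real.exp (-t ^ 2 / 2 - (-C) * t)))
    (Metric.ball_mem_nhds x one_pos)
    (Filter.Eventually.of_forall fun y =>
      (OU_cont p (a * (y - mu))).aestronglyMeasurable measurableSet_Ioi)
    (OU_integrable p (a * (x - mu)) hp)
    ?meas ?bound ?boundint ?diff
  · -- conclude
    have h2 : (∫ t in Ioi (0:ℝ), F' x t) = -a * Jint (p+1) (a * (x - mu)) := by
      rw [Jint, ← MeasureTheory.integral_const_mul]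
      apply setIntegral_congr_fun measurableSet_Ioi
      intro t ht
      simp only [F']
      rw [Real.rpow_add_one (ne_of_gt ht)]
      ring
    rw [← h2]
    exact key.2
  case meas =>
    apply AEStronglyMeasurable.mul
    · exact (Continuous.aestronglyMeasurable (by continuity)).restrict
    · exact (OU_cont p (a * (x - mu))).aestronglyMeasurable measurableSet_Ioi
  case bound =>
    filter_upwards [ae_restrict_mem measurableSet_Ioi] with t ht y hy
    have ht' : (0:ℝ) < t := ht
    have h1 : ‖F' y t‖ = a * t * (t ^ p * Real.exp (-t ^ 2 / 2 - (a * (y - mu)) * t)) := by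
      rw [Real.norm_eq_abs]
      show |(-(a * t)) * (t ^ p * Real.exp (-t ^ 2 / 2 - (a * (y - mu)) * t))| = _
      rw [abs_of_nonpos (by
        apply mul_nonpos_of_nonpos_of_nonneg
        · nlinarith
        · exact mul_nonneg (Real.rpow_nonneg ht'.le p) (Real.exp_pos _).le)]
      ring
    rw [h1]
    have hyb : |y - mu| ≤ |x - mu| + 1 := by
      have := mem_ball_iff_norm.mp hy
      rw [Real.norm_eq_abs] at this
      calc |y - mu| = |(y - x) + (x - mu)| := by ring_nf
        _ ≤ |y - x| + |x - mu| := abs_add_le _ _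
        _ ≤ |x - mu| + 1 := by linarith
    have hexp : Real.exp (-t ^ 2 / 2 - (a * (y - mu)) * t)
        ≤ Real.exp (-t ^ 2 / 2 - (-C) * t) := by
      apply Real.exp_le_exp.mpr
      have h4 : a * (y - mu) * t ≥ -(C * t) := by
        have h3 : a * (y - mu) ≥ -C := by
          rw [hC]
          nlinarith [neg_abs_le (y - mu), abs_nonneg (y-mu)]
        nlinarith
      linarith
    calc a * t * (t ^ p * Real.exp (-t ^ 2 / 2 - (a * (y - mu)) * t))
        ≤ a * t * (t ^ p * Real.exp (-t ^ 2 / 2 - (-C) * t)) := by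
          apply mul_le_mul_of_nonneg_left _ (by positivity)
          exact mul_le_mul_of_nonneg_left hexp (Real.rpow_nonneg ht'.le p)
      _ = a * (t ^ (p+1) * Real.exp (-t ^ 2 / 2 - (-C) * t)) := by
          rw [Real.rpow_add_one (ne_of_gt ht')]; ring
  case boundint =>
    exact (OU_integrable (p+1) (-C) (by linarith)).const_mul a
  case diff =>
    filter_upwards [ae_restrict_mem measurableSet_Ioi] with t ht y hy
    have hinner : HasDerivAt (fun y : ℝ => -t ^ 2 / 2 - (a * (y - mu)) * t) (-(a * t)) y := by
      have h1 : HasDerivAt (fun y : ℝ => (a * (y - mu)) * t) (a * t) y := by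
        simpa using (((hasDerivAt_id y).sub_const mu).const_mul a).mul_const t
      simpa using h1.const_sub (-t ^ 2 / 2)
    have h2 := (hinner.exp).const_mul (t ^ p)
    show HasDerivAt (fun y' : ℝ => t ^ p * Real.exp (-t ^ 2 / 2 - (a * (y' - mu)) * t))
      ((-(a * t)) * (t ^ p * Real.exp (-t ^ 2 / 2 - (a * (y - mu)) * t))) y
    refine h2.congr_deriv ?_
    ring

lemma Jint_ibp (p c : ℝ) (hp : 0 < p) :
    p * Jint (p - 1) c = Jint (p + 1) c + c * Jint p c := by
  set g : ℝ → ℝ := fun t => t ^ p * Real.exp (-t ^ 2 / 2 - c * t) with hg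
  set g' : ℝ → ℝ := fun t =>
    p * t ^ (p - 1) * Real.exp (-t ^ 2 / 2 - c * t)
      + t ^ p * (Real.exp (-t ^ 2 / 2 - c * t) * (-t - c)) with hg'
  have hderiv : ∀ t ∈ Ioi (0:ℝ), HasDerivAt g (g' t) t := by
    intro t ht
    have h1 : HasDerivAt (fun t : ℝ => t ^ p) (p * t ^ (p - 1)) t :=
      Real.hasDerivAt_rpow_const (Or.inl (ne_of_gt ht))
    have h2 : HasDerivAt (fun t : ℝ => -t ^ 2 / 2 - c * t) (-t - c) t := by
      have := (((hasDerivAt_pow 2 t).neg.div_const 2)).sub ((hasDerivAt_id t).const_mul c)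
      exact this.congr_deriv (by push_cast; ring)
    exact h1.mul h2.exp
  have hcont : ContinuousWithinAt g (Ici 0) 0 := by
    apply ContinuousWithinAt.mul
    · have : ContinuousAt (fun t : ℝ => t ^ p) 0 :=
        Real.continuousAt_rpow_const 0 p (Or.inr hp.le)
      exact this.continuousWithinAt
    · exact (Real.continuous_exp.comp (by continuity)).continuousWithinAt
  have htop : Tendsto g atTop (𝓝 0) := by
    have hlim : Tendsto (fun t : ℝ => Real.exp (c ^ 2) * (t ^ p * Real.exp (-(1/4) * t)))
        atTop (𝓝 0) := by
      have := tendsto_rpow_mul_exp_neg_mul_atTop_nhds_zero p (1/4) (by norm_num)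
      simpa using this.const_mul (Real.exp (c ^ 2))
    apply squeeze_zero' (g := fun t => Real.exp (c ^ 2) * (t ^ p * Real.exp (-(1/4) * t)))
    · filter_upwards [eventually_gt_atTop 0] with t ht
      exact mul_nonneg (Real.rpow_nonneg ht.le p) (Real.exp_pos _).le
    · filter_upwards [eventually_ge_atTop 1] with t ht
      calc g t ≤ Real.exp (c ^ 2) * (t ^ p * Real.exp (-(1/4) * t ^ 2)) :=
            OU_bound p c (by linarith)
        _ ≤ Real.exp (c ^ 2) * (t ^ p * Real.exp (-(1/4) * t)) := by
            apply mul_le_mul_of_nonneg_left _ (Real.exp_pos _).le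
            apply mul_le_mul_of_nonneg_left _ (Real.rpow_nonneg (by linarith) p)
            apply Real.exp_le_exp.mpr
            nlinarith
    · exact hlim
  have hint : IntegrableOn g' (Ioi 0) := by
    have e1 := (OU_integrable (p-1) c (by linarith)).const_mul p
    have e2 := OU_integrable (p+1) c (by linarith)
    have e3 := (OU_integrable p c (by linarith)).const_mul c
    have h4 := (e1.sub e2).sub e3
    apply IntegrableOn.congr_fun h4 _ measurableSet_Ioi
    intro t ht
    simp only [Pi.sub_apply]
    simp only [hg']
    rw [Real.rpow_add_one (ne_of_gt ht)]
    ring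
  have h0 := integral_Ioi_of_hasDerivAt_of_tendsto hcont hderiv hint htop
  have hg0 : g 0 = 0 := by
    simp [hg, Real.zero_rpow (ne_of_gt hp)]
  rw [hg0, sub_zero] at h0
  have hsplit : (∫ t in Ioi (0:ℝ), g' t)
      = p * Jint (p-1) c - Jint (p+1) c - c * Jint p c := by
    have e1 := (OU_integrable (p-1) c (by linarith)).const_mul p
    have e2 := OU_integrable (p+1) c (by linarith)
    have e3 := (OU_integrable p c (by linarith)).const_mul c
    have h5 : (∫ t in Ioi (0:ℝ), g' t)
        = ∫ t in Ioi (0:ℝ), (p * (t ^ (p-1) * Real.exp (-t ^ 2 / 2 - c * t))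
            - t ^ (p+1) * Real.exp (-t ^ 2 / 2 - c * t)
            - c * (t ^ p * Real.exp (-t ^ 2 / 2 - c * t))) := by
      apply setIntegral_congr_fun measurableSet_Ioi
      intro t ht
      simp only [hg']
      rw [Real.rpow_add_one (ne_of_gt ht)]
      ring
    have e12 : Integrable (fun t : ℝ => p * (t ^ (p-1) * Real.exp (-t ^ 2 / 2 - c * t))
        - t ^ (p+1) * Real.exp (-t ^ 2 / 2 - c * t)) (volume.restrict (Ioi 0)) := e1.sub e2
    rw [h5, integral_sub e12 e3, integral_sub e1 e2,
      MeasureTheory.integral_const_mul, MeasureTheory.integral_const_mul]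
    rfl
  rw [hsplit] at h0
  linarith

/-- `φ` solves the Ornstein–Uhlenbeck characteristic equation
`(1/2)σ² φ''(x) + θ(μ - x) φ'(x) = λ φ(x)` for every `x ∈ ℝ`. -/
theorem statement2 (lam th mu sig : ℝ)
    (hlam : 0 < lam) (hth : 0 < th) (hmu : 0 < mu) (hsig : 0 < sig) :
    ∀ x : ℝ,
      1 / 2 * sig ^ 2 * deriv (deriv (OUphi lam th mu sig)) x
        + th * (mu - x) * deriv (OUphi lam th mu sig) x
      = lam * OUphi lam th mu sig x := by
  intro x
  set ν : ℝ := lam / th with hνdef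
  set a : ℝ := Real.sqrt (2 * th) / sig with hadef
  have hν : 0 < ν := div_pos hlam hth
  have ha : 0 < a := div_pos (Real.sqrt_pos.mpr (by linarith)) hsig
  have ha2' : sig ^ 2 * a ^ 2 = 2 * th := by
    rw [hadef, div_pow, Real.sq_sqrt (by linarith : (0:ℝ) ≤ 2 * th)]
    field_simp
  have hphi : OUphi lam th mu sig = fun y => Jint (ν - 1) (a * (y - mu)) := by
    funext y
    unfold OUphi Jint
    apply setIntegral_congr_fun measurableSet_Ioi
    intro t ht
    congr 1
    simp only [hνdef, hadef]
    ring
  have hD1 : ∀ y : ℝ, HasDerivAt (OUphi lam th mu sig)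
      (-a * Jint (ν - 1 + 1) (a * (y - mu))) y := by
    intro y
    rw [hphi]
    exact hasDerivAt_Jint (ν - 1) a mu (by linarith) ha y
  have hd1 : deriv (OUphi lam th mu sig)
      = fun y => -a * Jint (ν - 1 + 1) (a * (y - mu)) :=
    funext fun y => (hD1 y).deriv
  have hD2 : HasDerivAt (deriv (OUphi lam th mu sig))
      (-a * (-a * Jint (ν - 1 + 1 + 1) (a * (x - mu)))) x := by
    rw [hd1]
    exact (hasDerivAt_Jint (ν - 1 + 1) a mu (by linarith) ha x).const_mul (-a)
  rw [hD2.deriv, hd1, hphi]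
  simp only []
  rw [show ν - 1 + 1 = ν by ring]
  have hibp := Jint_ibp ν (a * (x - mu)) hν
  have hlamth : lam = ν * th := by
    rw [hνdef]; field_simp
  linear_combination (Jint (ν + 1) (a * (x - mu)) / 2) * ha2' - th * hibp
    - (Jint (ν - 1) (a * (x - mu))) * hlamth
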